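/- arXiv:1206.0606 — 2 statements merged into one kernel-verified Lean document; each statement's English description precedes it below -/
import Mathlib

section
/- Let p₁, ..., p_k be distinct odd primes with ord_{p_i}(2) = ord_{p_j}(2) for all i, j, and suppose each p_i^{l_i} is an overpseudoprime to base 2 (or l_i = 1). Then n = p₁^{l₁} ⋯ p_k^{l_k} is an overpseudoprime to base 2. -/
/-- Multiplicative order of `b` modulo `n`. -/
noncomputable def ordn (b n : ℕ) : ℕ := orderOf (b : ZMod n)

/-- `n` is an overpseudoprime to base `b`: composite, coprime to `b`, and the
multiplicative order of `b` mod `d` is the same for all divisors `d > 1` of `n`. -/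
def Overpsp (b n : ℕ) : Prop :=
  1 < n ∧ ¬ n.Prime ∧ Nat.Coprime b n ∧
    ∀ d, d ∣ n → 1 < d → ordn b d = ordn b n

/-- `n` is primover to base `b`: prime or overpseudoprime to base `b`. -/
def Primover (b n : ℕ) : Prop := n.Prime ∨ Overpsp b n

/-- The cyclotomic coset of `2` modulo `n` containing `s`. -/
def coset (n s : ℕ) : Finset ℕ := (Finset.range n).image (fun k => 2 ^ k * s % n)

/-- The number of distinct cyclotomic cosets of `2` modulo `n`. -/
def numCosets (n : ℕ) : ℕ := ((Finset.Ioo 0 n).image (coset n)).card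

/-- `Φ_N(b)` as a natural number. -/
noncomputable def PhiN (N b : ℕ) : ℕ := ((Polynomial.cyclotomic N ℤ).eval (b : ℤ)).toNat



lemma ordn_dvd_of_dvd {d e : ℕ} (h : d ∣ e) : ordn 2 d ∣ ordn 2 e := by
  unfold ordn
  have := orderOf_map_dvd (ZMod.castHom h (ZMod d)).toMonoidHom (2 : ZMod e)
  simpa [map_ofNat] using this

lemma zmod_pow_eq_one_iff (m r : ℕ) : (2 : ZMod m) ^ r = 1 ↔ m ∣ 2 ^ r - 1 := by
  have h1 : (2 : ZMod m) ^ r = ((2 ^ r : ℕ) : ZMod m) := by push_cast; ring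
  have h2 : (1 : ZMod m) = ((1 : ℕ) : ZMod m) := by push_cast; ring
  rw [h1, h2, ZMod.natCast_eq_natCast_iff]
  rw [Nat.ModEq.comm, Nat.modEq_iff_dvd' (Nat.one_le_two_pow)]


theorem stmt6 (k : ℕ) (p l : Fin k → ℕ) (hp : ∀ i, (p i).Prime) (hodd : ∀ i, Odd (p i))
    (hinj : Function.Injective p) (hl : ∀ i, 1 ≤ l i)
    (hord : ∀ i j, ordn 2 (p i) = ordn 2 (p j))
    (hover : ∀ i, Overpsp 2 (p i ^ l i) ∨ l i = 1)
    (hcomp : ¬ (∏ i, p i ^ l i).Prime) (hgt : 1 < ∏ i, p i ^ l i) :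
    Overpsp 2 (∏ i, p i ^ l i) := by
  set n := ∏ i, p i ^ l i with hn
  -- k ≠ 0
  have hk : 0 < k := by
    rcases Nat.eq_zero_or_pos k with h | h
    · subst h; simp [hn] at hgt
    · exact h
  obtain ⟨i₀⟩ : Nonempty (Fin k) := ⟨⟨0, hk⟩⟩
  set r := ordn 2 (p i₀) with hr
  -- every prime dividing n is some p i
  have hprime_dvd : ∀ q : ℕ, q.Prime → q ∣ n → ∃ i, q = p i := by
    intro q hq hqn
    rw [hn] at hqn
    obtain ⟨i, -, hqi⟩ := hq.prime.exists_mem_finset_dvd hqn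
    exact ⟨i, ((Nat.prime_dvd_prime_iff_eq hq (hp i)).mp ((hq.dvd_of_dvd_pow hqi)))⟩
  -- n is odd
  have hnodd : Odd n := by
    rw [Nat.not_even_iff_odd.symm, even_iff_two_dvd]
    intro h2
    obtain ⟨i, hi⟩ := hprime_dvd 2 Nat.prime_two h2
    exact (Nat.not_odd_iff_even.mpr (by rw [← hi]; exact even_two)) (hodd i)
  have hcop : Nat.Coprime 2 n := Nat.coprime_two_left.mpr hnodd
  -- each prime power has order r
  have hpow : ∀ i, ordn 2 (p i ^ l i) = r := by
    intro i
    rcases hover i with h | h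
    · obtain ⟨-, -, -, h4⟩ := h
      have := h4 (p i) (dvd_pow_self _ (Nat.one_le_iff_ne_zero.mp (hl i))) (hp i).one_lt
      rw [← this]; exact hord i i₀
    · rw [h, pow_one]; exact hord i i₀
  -- n divides 2^r - 1
  have hdvd : n ∣ 2 ^ r - 1 := by
    have key : ∀ i, (p i ^ l i : ℤ) ∣ ((2 ^ r - 1 : ℕ) : ℤ) := by
      intro i
      have h := (zmod_pow_eq_one_iff (p i ^ l i) r).mp
        (by rw [← hpow i]; exact pow_orderOf_eq_one _)
      have := Int.natCast_dvd_natCast.mpr h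
      push_cast at this ⊢
      exact this
    have hpair : Pairwise (Function.onFun IsCoprime fun i => (p i ^ l i : ℤ)) := by
      intro i j hij
      have : Nat.Coprime (p i ^ l i) (p j ^ l j) :=
        Nat.Coprime.pow _ _ ((Nat.coprime_primes (hp i) (hp j)).mpr (fun h => hij (hinj h)))
      show IsCoprime ((p i : ℤ) ^ l i) ((p j : ℤ) ^ l j)
      rw [Int.isCoprime_iff_gcd_eq_one, ← Nat.cast_pow, ← Nat.cast_pow,
        Int.gcd_natCast_natCast]
      exact this
    have := Fintype.prod_dvd_of_coprime hpair key
    rw [← Int.natCast_dvd_natCast, hn, Nat.cast_prod,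
      Nat.cast_sub Nat.one_le_two_pow]
    push_cast
    simpa using this
  -- ordn 2 n = r
  have hnr : ordn 2 n = r := by
    apply Nat.dvd_antisymm
    · exact orderOf_dvd_of_pow_eq_one ((zmod_pow_eq_one_iff n r).mpr hdvd)
    · rw [← hpow i₀]
      exact ordn_dvd_of_dvd (Finset.dvd_prod_of_mem _ (Finset.mem_univ i₀))
  refine ⟨hgt, hcomp, hcop, fun d hd hd1 => ?_⟩
  rw [hnr]
  apply Nat.dvd_antisymm
  · rw [← hnr]; exact ordn_dvd_of_dvd hd
  · obtain ⟨q, hq, hqd⟩ := Nat.exists_prime_and_dvd hd1.ne'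
    obtain ⟨i, rfl⟩ := hprime_dvd q hq (hqd.trans hd)
    have h1 : ordn 2 (p i) ∣ ordn 2 d := ordn_dvd_of_dvd hqd
    rw [hr, ← hord i i₀]
    exact h1
end

section
/- A prime p is a Wieferich prime to base b of order at least w (i.e., ν_p(b^{p−1} − 1) ≥ w + 1) if and only if p^{w+1} is an overpseudoprime to base b. -/
lemma ordn_dvd_of_dvd_s8 (b m n : ℕ) (h : m ∣ n) : ordn b m ∣ ordn b n := by
  have := orderOf_map_dvd (ZMod.castHom h (ZMod m)).toMonoidHom (b : ZMod n)
  simpa [ordn] using this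

lemma pow_eq_one_iff_dvd (b n r : ℕ) (hb : 1 ≤ b) (hn : 0 < n) :
    (b : ZMod n) ^ r = 1 ↔ n ∣ b ^ r - 1 := by
  haveI : NeZero n := ⟨hn.ne'⟩
  rw [← Nat.cast_pow, ← ZMod.natCast_eq_zero_iff,
    Nat.cast_sub (Nat.one_le_pow _ _ hb), Nat.cast_one, sub_eq_zero, Nat.cast_pow]

theorem stmt8 (p b w : ℕ) (hp : p.Prime) (hodd : Odd p) (hb : 1 < b) (hpb : ¬ p ∣ b)
    (hw : 1 ≤ w) :
    w + 1 ≤ padicValNat p (b ^ (p - 1) - 1) ↔ Overpsp b (p ^ (w + 1)) := by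
  haveI : Fact p.Prime := ⟨hp⟩
  have hp3 : 3 ≤ p := hp.two_le.lt_of_ne (by rintro rfl; exact (Nat.not_odd_iff_even.mpr even_two) hodd) 
  have hb0 : 1 ≤ b := hb.le
  set r := ordn b p with hr
  have hbz : (b : ZMod p) ≠ 0 := by
    rwa [Ne, ZMod.natCast_eq_zero_iff]
  have hfl : (b : ZMod p) ^ (p - 1) = 1 := by
    have := ZMod.pow_card_sub_one_eq_one hbz
    simpa using this
  have hr_pos : 0 < r := by
    refine orderOf_pos_iff.mpr (isOfFinOrder_iff_pow_eq_one.mpr ⟨p - 1, by omega, hfl⟩)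
  have hr_dvd : r ∣ p - 1 := orderOf_dvd_of_pow_eq_one hfl
  have hp_dvd : p ∣ b ^ r - 1 := by
    rw [← pow_eq_one_iff_dvd b p r hb0 hp.pos]
    exact pow_orderOf_eq_one _
  have hbr : 1 < b ^ r := Nat.one_lt_pow hr_pos.ne' hb
  have hbrne : b ^ r - 1 ≠ 0 := by omega
  -- key: for 0 < k, ordn b (p^k) = r ↔ p^k ∣ b^r - 1
  have key : ∀ k : ℕ, 0 < k → (ordn b (p ^ k) = r ↔ p ^ k ∣ b ^ r - 1) := by
    intro k hk
    have hpk : 0 < p ^ k := Nat.pow_pos hp.pos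
    constructor
    · intro h
      rw [← pow_eq_one_iff_dvd b (p ^ k) r hb0 hpk, ← h]
      exact pow_orderOf_eq_one _
    · intro h
      have h1 : ordn b (p ^ k) ∣ r :=
        orderOf_dvd_of_pow_eq_one ((pow_eq_one_iff_dvd b (p ^ k) r hb0 hpk).mpr h)
      have h2 : r ∣ ordn b (p ^ k) :=
        ordn_dvd_of_dvd_s8 b p (p ^ k) (dvd_pow_self p hk.ne')
      exact Nat.dvd_antisymm h1 h2
  -- LTE: padicValNat p (b^(p-1) - 1) = padicValNat p (b^r - 1)
  obtain ⟨t, ht⟩ := hr_dvd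
  have ht_pos : 0 < t := by
    rcases Nat.eq_zero_or_pos t with rfl | h
    · omega
    · exact h
  have hptnd : ¬ p ∣ t := by
    intro hdvd
    have : p ≤ t := Nat.le_of_dvd ht_pos hdvd
    have : t ≤ p - 1 := Nat.le_of_dvd (by omega) ⟨r, by rw [ht, mul_comm]⟩
    omega
  have hval : padicValNat p (b ^ (p - 1) - 1) = padicValNat p (b ^ r - 1) := by
    have := padicValNat.pow_sub_pow (p := p) (x := b ^ r) (y := 1) hodd hbr
      (by simpa using hp_dvd) (by
        intro h
        exact hpb (hp.dvd_of_dvd_pow h)) ht_pos.ne'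
    simp only [one_pow, ← pow_mul, ← ht] at this
    rw [this, padicValNat.eq_zero_of_not_dvd hptnd, add_zero]
  have hdvd_iff : w + 1 ≤ padicValNat p (b ^ (p - 1) - 1) ↔ p ^ (w + 1) ∣ b ^ r - 1 := by
    rw [hval, ← Nat.factorization_def _ hp, ← Nat.Prime.pow_dvd_iff_le_factorization hp hbrne]
  rw [hdvd_iff, ← key (w + 1) (by omega)]
  constructor
  · intro hord
    refine ⟨Nat.one_lt_pow (by omega) (by omega), ?_, ?_, ?_⟩
    · exact Nat.Prime.not_prime_pow (by omega)
    · exact ((hp.coprime_iff_not_dvd.mpr hpb).symm.pow_right _)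
    · intro d hd hd1
      obtain ⟨k, hk, rfl⟩ := (Nat.dvd_prime_pow hp).mp hd
      have hk0 : 0 < k := by
        rcases Nat.eq_zero_or_pos k with rfl | h
        · simp at hd1
        · exact h
      have h1 : r ∣ ordn b (p ^ k) := ordn_dvd_of_dvd_s8 b p (p ^ k) (dvd_pow_self p hk0.ne')
      have h2 : ordn b (p ^ k) ∣ ordn b (p ^ (w + 1)) :=
        ordn_dvd_of_dvd_s8 b _ _ (pow_dvd_pow p hk)
      rw [hord] at h2 ⊢
      exact Nat.dvd_antisymm h2 h1
  · rintro ⟨-, -, -, hall⟩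
    have := hall p (dvd_pow_self p (by omega : w + 1 ≠ 0)) hp.one_lt
    rw [← this]
end
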